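/- (Optimal truncation for distortion-bounded obfuscation) Let W have singular values s_1 ≥ ... ≥ s_m > 0 and z = Σ_{k=1}^n α_k v_k. Define ε_k = sqrt(Σ_{i=k+1}^m α_i² s_i²). If z' is obtained by keeping α'_k = α_k for k < m', setting α'_{m'} = α_{m'} − γ·sign(α_{m'}) with γ = sqrt(ε² − ε_{m'}²)/s_{m'}, and α'_k = 0 for k > m', where m' is the smallest index with ε_{m'} ≤ ε, then the distortion constraint ‖W(z − z')‖ ≤ ε is satisfied (with equality when γ ≥ 0 is chosen as above). -/

import Mathlib

open Matrix

/-- Optimal truncation for distortion-bounded obfuscation: with singular values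
`s_1 ≥ … ≥ s_m > 0`, `z = Σ_k α_k v_k`, `ε_k = sqrt (Σ_{i>k} α_i² s_i²)`,
`m' = min {k : ε_k ≤ ε}`, the modified vector `z'` keeping `α_k` for `k < m'`, setting the
boundary coefficient to `α − sign(α)·sqrt(ε² − ε_{m'}²)/s` and zeroing the rest satisfies
the distortion constraint `‖W(z − z')‖ ≤ ε`. -/
theorem truncation_satisfies_distortion
    (m n : ℕ) (hmn : m ≤ n)
    (U : Matrix (Fin m) (Fin m) ℝ) (V : Matrix (Fin n) (Fin n) ℝ)
    (S : Matrix (Fin m) (Fin n) ℝ) (s : Fin m → ℝ)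
    (hU : U * U.transpose = 1) (hV : V * V.transpose = 1)
    (hS : ∀ i j, S i j = if (i : ℕ) = (j : ℕ) then s i else 0)
    (hpos : ∀ i, 0 < s i) (hsort : ∀ i j : Fin m, i ≤ j → s j ≤ s i)
    (W : Matrix (Fin m) (Fin n) ℝ) (hW : W = U * S * V.transpose)
    (z : Fin n → ℝ) (α : Fin n → ℝ)
    (hα : ∀ k, α k = ∑ i, V i k * z i)
    (ε : ℝ) (hε : 0 < ε)
    (εf : ℕ → ℝ)
    (hεf : ∀ k, εf k = Real.sqrt (∑ i ∈ Finset.univ.filter (fun i : Fin m => k ≤ (i : ℕ)),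
      α (Fin.castLE hmn i) ^ 2 * s i ^ 2))
    (m' : ℕ) (hm' : m' = sInf {k : ℕ | εf k ≤ ε})
    (β : Fin n → ℝ)
    (hβ : ∀ k : Fin n, β k =
      if hk : (k : ℕ) < m then
        (if (k : ℕ) + 1 < m' then α k
         else if (k : ℕ) + 1 = m' then
           α k - Real.sqrt (ε ^ 2 - εf m' ^ 2) / s ⟨(k : ℕ), hk⟩ * Real.sign (α k)
         else 0)
      else 0)
    (z' : Fin n → ℝ) (hz' : ∀ i, z' i = ∑ k : Fin n, β k * V i k) :
    Real.sqrt (∑ i, (W.mulVec (fun j => z j - z' j) i) ^ 2) ≤ ε := by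
  have hVt : V.transpose * V = 1 := mul_eq_one_comm.mp hV
  have hUt : U.transpose * U = 1 := mul_eq_one_comm.mp hU
  -- facts about m'
  have hεm' : εf m' ≤ ε := by
    have hmem : m ∈ {k : ℕ | εf k ≤ ε} := by
      have h0 : εf m = 0 := by
        rw [hεf]
        have he : (Finset.univ.filter (fun i : Fin m => m ≤ (i : ℕ))) = ∅ := by
          apply Finset.filter_false_of_mem
          intro i _
          exact Nat.not_le.mpr i.isLt
        rw [he, Finset.sum_empty, Real.sqrt_zero]
      simp only [Set.mem_setOf_eq, h0]
      exact hε.le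
    rw [hm']
    exact Nat.sInf_mem ⟨m, hmem⟩
  have hεf_nonneg : 0 ≤ εf m' := by rw [hεf]; exact Real.sqrt_nonneg _
  have hsum_nonneg : (0:ℝ) ≤ ∑ i ∈ Finset.univ.filter (fun i : Fin m => m' ≤ (i : ℕ)),
      α (Fin.castLE hmn i) ^ 2 * s i ^ 2 :=
    Finset.sum_nonneg fun i _ => mul_nonneg (sq_nonneg _) (sq_nonneg _)
  have hsq : εf m' ^ 2 = ∑ i ∈ Finset.univ.filter (fun i : Fin m => m' ≤ (i : ℕ)),
      α (Fin.castLE hmn i) ^ 2 * s i ^ 2 := by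
    rw [hεf]; exact Real.sq_sqrt hsum_nonneg
  have hgap : 0 ≤ ε ^ 2 - εf m' ^ 2 := by nlinarith
  -- the coefficient difference
  set d : Fin n → ℝ := fun k => α k - β k with hd
  have hVd : V.transpose.mulVec (fun j => z j - z' j) = d := by
    funext k
    simp only [Matrix.mulVec, dotProduct, Matrix.transpose_apply, hd]
    have h2 : ∑ i, V i k * z' i = β k := by
      have : ∀ i, V i k * z' i = ∑ j, β j * (V i k * V i j) := by
        intro i
        rw [hz' i, Finset.mul_sum]
        exact Finset.sum_congr rfl fun j _ => by ring
      rw [Finset.sum_congr rfl fun i _ => this i, Finset.sum_comm]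
      have h3 : ∀ j : Fin n, ∑ i, β j * (V i k * V i j) = β j * (1 : Matrix (Fin n) (Fin n) ℝ) k j := by
        intro j
        rw [← hVt]
        simp only [Matrix.mul_apply, Matrix.transpose_apply, Finset.mul_sum]
      rw [Finset.sum_congr rfl fun j _ => h3 j]
      simp [Matrix.one_apply]
    calc ∑ i, V i k * (z i - z' i) = (∑ i, V i k * z i) - ∑ i, V i k * z' i := by
          rw [← Finset.sum_sub_distrib]; exact Finset.sum_congr rfl fun i _ => by ring
      _ = α k - β k := by rw [← hα k, h2]
  -- reduce to the diagonal sum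
  have hWv : W.mulVec (fun j => z j - z' j) = U.mulVec (S.mulVec d) := by
    rw [hW, ← hVd, Matrix.mulVec_mulVec, Matrix.mulVec_mulVec]
  have hUnorm : ∑ i, (U.mulVec (S.mulVec d) i) ^ 2 = ∑ i, (S.mulVec d i) ^ 2 := by
    set y := S.mulVec d
    have h1 : ∀ v : Fin m → ℝ, ∑ i, (v i) ^ 2 = v ⬝ᵥ v := by
      intro v; simp [dotProduct, sq]
    rw [h1, h1]
    rw [Matrix.dotProduct_mulVec, ← Matrix.mulVec_transpose, Matrix.mulVec_mulVec, hUt,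
      Matrix.one_mulVec]
  -- diagonal action of S
  have hSd : ∀ i : Fin m, S.mulVec d i = s i * d (Fin.castLE hmn i) := by
    intro i
    simp only [Matrix.mulVec, dotProduct]
    rw [Finset.sum_eq_single (Fin.castLE hmn i)]
    · rw [hS]; simp
    · intro j _ hj
      rw [hS, if_neg, zero_mul]
      intro hij
      exact hj (Fin.ext hij.symm)
    · intro h; exact absurd (Finset.mem_univ _) h
  -- pointwise description of the squared terms
  have hterm : ∀ i : Fin m, (s i * d (Fin.castLE hmn i)) ^ 2 =
      (if (i : ℕ) + 1 = m' then (ε ^ 2 - εf m' ^ 2) * Real.sign (α (Fin.castLE hmn i)) ^ 2 else 0)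
      + (if m' ≤ (i : ℕ) then α (Fin.castLE hmn i) ^ 2 * s i ^ 2 else 0) := by
    intro i
    have hk : ((Fin.castLE hmn i : Fin n) : ℕ) < m := i.isLt
    have hβi := hβ (Fin.castLE hmn i)
    rw [dif_pos hk] at hβi
    have hci : ((Fin.castLE hmn i : Fin n) : ℕ) = (i : ℕ) := rfl
    rcases lt_trichotomy ((i : ℕ) + 1) m' with hlt | heq | hgt
    · rw [if_pos (show ((Fin.castLE hmn i : Fin n) : ℕ) + 1 < m' by omega)] at hβi
      rw [if_neg (by omega), if_neg (by omega)]
      simp [hd, hβi]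
    · rw [if_neg (show ¬(((Fin.castLE hmn i : Fin n) : ℕ) + 1 < m') by omega), if_pos (show ((Fin.castLE hmn i : Fin n) : ℕ) + 1 = m' by omega)] at hβi
      rw [if_pos heq, if_neg (by omega)]
      have hdi : d (Fin.castLE hmn i) =
          Real.sqrt (ε ^ 2 - εf m' ^ 2) / s i * Real.sign (α (Fin.castLE hmn i)) := by
        have hsi : s ⟨((Fin.castLE hmn i : Fin n) : ℕ), hk⟩ = s i := rfl
        simp only [hd, hβi, hsi]
        ring
      rw [hdi]
      have hs0 : s i ≠ 0 := (hpos i).ne'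
      field_simp
      rw [Real.sq_sqrt hgap, add_zero]
    · rw [if_neg (show ¬(((Fin.castLE hmn i : Fin n) : ℕ) + 1 < m') by omega), if_neg (show ¬(((Fin.castLE hmn i : Fin n) : ℕ) + 1 = m') by omega)] at hβi
      rw [if_neg (by omega), if_pos (by omega)]
      simp only [hd, hβi, sub_zero]
      ring
  -- the two pieces
  have hB : ∑ i : Fin m, (if m' ≤ (i : ℕ) then α (Fin.castLE hmn i) ^ 2 * s i ^ 2 else 0)
      = εf m' ^ 2 := by
    rw [hsq, Finset.sum_filter]
  have hA : ∑ i : Fin m, (if (i : ℕ) + 1 = m' then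
      (ε ^ 2 - εf m' ^ 2) * Real.sign (α (Fin.castLE hmn i)) ^ 2 else 0) ≤ ε ^ 2 - εf m' ^ 2 := by
    by_cases hm0 : ∃ p : Fin m, (p : ℕ) + 1 = m'
    · obtain ⟨p, hp⟩ := hm0
      rw [Finset.sum_eq_single p]
      · have hsgn : Real.sign (α (Fin.castLE hmn p)) ^ 2 ≤ 1 := by
          rcases Real.sign_apply_eq (α (Fin.castLE hmn p)) with h | h | h <;> rw [h] <;> norm_num
        rw [if_pos hp]
        nlinarith
      · intro j _ hj
        rw [if_neg]
        intro hjp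
        exact hj (Fin.ext (by omega))
      · intro h; exact absurd (Finset.mem_univ _) h
    · have hall : ∀ i : Fin m, ¬((i : ℕ) + 1 = m') := fun i hi => hm0 ⟨i, hi⟩
      calc ∑ i : Fin m, (if (i : ℕ) + 1 = m' then
            (ε ^ 2 - εf m' ^ 2) * Real.sign (α (Fin.castLE hmn i)) ^ 2 else 0)
          = 0 := by rw [Finset.sum_congr rfl fun i _ => if_neg (hall i), Finset.sum_const, smul_zero]
        _ ≤ ε ^ 2 - εf m' ^ 2 := hgap
  have hsum : ∑ i : Fin m, (s i * d (Fin.castLE hmn i)) ^ 2 ≤ ε ^ 2 := by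
    rw [Finset.sum_congr rfl fun i _ => hterm i, Finset.sum_add_distrib, hB]
    linarith
  calc Real.sqrt (∑ i, (W.mulVec (fun j => z j - z' j) i) ^ 2)
      = Real.sqrt (∑ i : Fin m, (s i * d (Fin.castLE hmn i)) ^ 2) := by
        rw [hWv, hUnorm]
        congr 1
        exact Finset.sum_congr rfl fun i _ => by rw [hSd i]
    _ ≤ Real.sqrt (ε ^ 2) := Real.sqrt_le_sqrt hsum
    _ = ε := Real.sqrt_sq hε.le
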